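/- arXiv:1403.3949 — 4 statements merged into one kernel-verified Lean document; each statement's English description precedes it below -/
import Mathlib

section
/- Let d ≥ 2 and m ≥ 1 be integers, and let C > 0, h > 0, δ ∈ (0,1]. Then the sum ∑_{j=1}^∞ log(1 + C δ^{-1} h^{-2m} j^{-2m/(d-1)}) is bounded by C_m h^{-(d-1)} δ^{-(d-1)/(2m)}, where C_m = C^{(d-1)/(2m)} ∫_0^∞ log(1 + t^{-2m/(d-1)}) dt is finite provided 2m > d-1. -/
open Real MeasureTheory Set

private lemma aux_nonneg {a p : ℝ} (ha : 0 ≤ a) {t : ℝ} (ht : 0 < t) :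
    0 ≤ Real.log (1 + a * t ^ (-p)) :=
  Real.log_nonneg (by nlinarith [Real.rpow_nonneg ht.le (-p)])

private lemma aux_anti {a p : ℝ} (ha : 0 ≤ a) (hp : 0 ≤ p) {x y : ℝ}
    (hx : 0 < x) (hxy : x ≤ y) :
    Real.log (1 + a * y ^ (-p)) ≤ Real.log (1 + a * x ^ (-p)) := by
  have h1 : y ^ (-p) ≤ x ^ (-p) :=
    Real.rpow_le_rpow_of_nonpos hx hxy (neg_nonpos.mpr hp)
  have h2 : (0:ℝ) ≤ y ^ (-p) := Real.rpow_nonneg (hx.trans_le hxy).le _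
  apply Real.log_le_log (by nlinarith)
  nlinarith

private lemma aux_cont {a p : ℝ} (ha : 0 ≤ a) : ContinuousOn
    (fun t : ℝ => Real.log (1 + a * t ^ (-p))) (Ioi 0) := by
  intro t ht
  apply ContinuousAt.continuousWithinAt
  have h1 : ContinuousAt (fun t : ℝ => t ^ (-p)) t :=
    Real.continuousAt_rpow_const t (-p) (Or.inl (ne_of_gt ht))
  have h2 : (0:ℝ) ≤ a * t ^ (-p) := mul_nonneg ha (Real.rpow_nonneg (le_of_lt ht) _)
  exact (Real.continuousAt_log (by linarith)).comp
    (continuousAt_const.add (continuousAt_const.mul h1))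

private lemma aux_integrable {a p : ℝ} (ha : 0 < a) (hp : 1 < p) :
    IntegrableOn (fun t : ℝ => Real.log (1 + a * t ^ (-p))) (Ioi 0) := by
  have hp0 : 0 < p := zero_lt_one.trans hp
  have h01 : IntegrableOn (fun t : ℝ => Real.log (1 + a * t ^ (-p))) (Ioc 0 1) := by
    set ε : ℝ := (2 * p)⁻¹ with hε
    have hε0 : 0 < ε := by positivity
    have hg : IntegrableOn (fun t : ℝ => ((1 + a) ^ ε / ε) * t ^ (-(1/2) : ℝ)) (Ioc 0 1) := by
      have h1 := intervalIntegral.intervalIntegrable_rpow' (a := 0) (b := 1) (r := (-(1/2) : ℝ)) (by norm_num)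
      exact ((intervalIntegrable_iff_integrableOn_Ioc_of_le
        (by norm_num : (0:ℝ) ≤ 1)).mp h1).const_mul _
    refine Integrable.mono' hg
      (((aux_cont ha.le).mono Ioc_subset_Ioi_self).aestronglyMeasurable measurableSet_Ioc) ?_
    filter_upwards [ae_restrict_mem measurableSet_Ioc] with t ht
    obtain ⟨ht0, ht1⟩ := ht
    have hu1 : 1 ≤ t ^ (-p) :=
      Real.one_le_rpow_of_pos_of_le_one_of_nonpos ht0 ht1 (by linarith)
    have hu0 : (0:ℝ) ≤ t ^ (-p) := by linarith
    rw [Real.norm_eq_abs, abs_of_nonneg (aux_nonneg ha.le ht0)]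
    have step1 : Real.log (1 + a * t ^ (-p)) ≤ Real.log ((1 + a) * t ^ (-p)) := by
      apply Real.log_le_log (by nlinarith)
      nlinarith
    have step2 : Real.log ((1 + a) * t ^ (-p)) ≤ ((1 + a) * t ^ (-p)) ^ ε / ε :=
      Real.log_le_rpow_div (by nlinarith) hε0
    have hexp : (-p) * ε = -(1/2) := by
      rw [hε]
      field_simp
    have step3 : ((1 + a) * t ^ (-p)) ^ ε = (1 + a) ^ ε * t ^ (-(1/2) : ℝ) := by
      rw [Real.mul_rpow (by nlinarith) hu0, ← Real.rpow_mul ht0.le, hexp]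
    calc Real.log (1 + a * t ^ (-p)) ≤ ((1 + a) * t ^ (-p)) ^ ε / ε := step1.trans step2
      _ = ((1 + a) ^ ε / ε) * t ^ (-(1/2) : ℝ) := by rw [step3]; ring
  have h1i : IntegrableOn (fun t : ℝ => Real.log (1 + a * t ^ (-p))) (Ioi 1) := by
    have hg : IntegrableOn (fun t : ℝ => a * t ^ (-p)) (Ioi 1) :=
      (integrableOn_Ioi_rpow_of_lt (by linarith) one_pos).const_mul a
    refine Integrable.mono' hg
      (((aux_cont ha.le).mono (Ioi_subset_Ioi zero_le_one)).aestronglyMeasurable measurableSet_Ioi) ?_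
    filter_upwards [ae_restrict_mem measurableSet_Ioi] with t ht
    have ht0 : (0:ℝ) < t := lt_trans one_pos ht
    have hu0 : (0:ℝ) ≤ t ^ (-p) := Real.rpow_nonneg ht0.le _
    rw [Real.norm_eq_abs, abs_of_nonneg (aux_nonneg ha.le ht0)]
    have := Real.log_le_sub_one_of_pos (x := 1 + a * t ^ (-p)) (by nlinarith)
    linarith
  have := h01.union h1i
  rwa [Ioc_union_Ioi_eq_Ioi zero_le_one] at this

/-- Key computation (3.12): the sum of logs is bounded by the scaled integral,
which is finite when `2m > d-1`. -/
theorem stmt_0 (d m : ℕ) (hd : 2 ≤ d) (hm : 1 ≤ m) (C h δ : ℝ)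
    (hC : 0 < C) (hh : 0 < h) (hδ0 : 0 < δ) (hδ1 : δ ≤ 1)
    (h2m : (d : ℝ) - 1 < 2 * m) :
    IntegrableOn (fun t : ℝ => Real.log (1 + t ^ (-(2 * (m : ℝ) / ((d : ℝ) - 1))))) (Ioi 0) ∧
    ∑' j : ℕ+, Real.log (1 + C * δ⁻¹ * h ^ (-(2 * (m : ℝ))) *
        ((j : ℕ) : ℝ) ^ (-(2 * (m : ℝ) / ((d : ℝ) - 1)))) ≤
      (C ^ (((d : ℝ) - 1) / (2 * (m : ℝ))) *
        ∫ t in Ioi (0 : ℝ), Real.log (1 + t ^ (-(2 * (m : ℝ) / ((d : ℝ) - 1))))) *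
        h ^ (-((d : ℝ) - 1)) * δ ^ (-(((d : ℝ) - 1) / (2 * (m : ℝ)))) := by
  have hd1 : (0:ℝ) < (d:ℝ) - 1 := by
    have : (2:ℝ) ≤ d := by exact_mod_cast hd
    linarith
  have hm0 : (0:ℝ) < 2 * (m:ℝ) := by
    have : (1:ℝ) ≤ m := by exact_mod_cast hm
    linarith
  set p : ℝ := 2 * (m:ℝ) / ((d:ℝ) - 1) with hpdef
  set q : ℝ := ((d:ℝ) - 1) / (2 * (m:ℝ)) with hqdef
  have hp1 : 1 < p := (one_lt_div hd1).mpr h2m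
  have hp0 : 0 < p := zero_lt_one.trans hp1
  have hpq : p⁻¹ = q := by rw [hpdef, hqdef, inv_div]
  set a : ℝ := C * δ⁻¹ * h ^ (-(2 * (m:ℝ))) with hadef
  have ha : 0 < a := by
    have : (0:ℝ) < h ^ (-(2 * (m:ℝ))) := Real.rpow_pos_of_pos hh _
    positivity
  set F : ℝ → ℝ := fun t => Real.log (1 + a * t ^ (-p)) with hFdef
  set f : ℝ → ℝ := fun t => Real.log (1 + t ^ (-p)) with hfdef
  have hIntf : IntegrableOn f (Ioi 0) := by
    have := aux_integrable (a := 1) one_pos hp1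
    simpa [hfdef] using this
  have hIntF : IntegrableOn F (Ioi 0) := aux_integrable ha hp1
  set c : ℝ := a ^ p⁻¹ with hcdef
  have hc : 0 < c := Real.rpow_pos_of_pos ha _
  have hcp : c ^ p = a := by
    rw [hcdef, ← Real.rpow_mul ha.le, inv_mul_cancel₀ hp0.ne', Real.rpow_one]
  have hFf : EqOn F (fun t => f (c⁻¹ * t)) (Ioi 0) := by
    intro t ht
    simp only [hFdef, hfdef]
    congr 2
    rw [Real.mul_rpow (inv_nonneg.mpr hc.le) (le_of_lt ht),
      Real.inv_rpow hc.le, Real.rpow_neg hc.le, inv_inv, hcp]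
  have hchange : ∫ t in Ioi (0:ℝ), F t = c * ∫ s in Ioi (0:ℝ), f s := by
    rw [setIntegral_congr_fun measurableSet_Ioi hFf,
      integral_comp_mul_left_Ioi f 0 (inv_pos.mpr hc), mul_zero, smul_eq_mul, inv_inv]
  have hexp2 : (-(2 * (m:ℝ))) * q = -((d:ℝ) - 1) := by
    rw [hqdef]
    field_simp
  have hceq : c = C ^ q * δ ^ (-q) * h ^ (-((d:ℝ) - 1)) := by
    rw [hcdef, hpq, hadef]
    rw [Real.mul_rpow (by positivity) (Real.rpow_pos_of_pos hh _).le,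
      Real.mul_rpow hC.le (inv_nonneg.mpr hδ0.le),
      Real.inv_rpow hδ0.le, ← Real.rpow_neg hδ0.le,
      ← Real.rpow_mul hh.le, hexp2]
  -- the sum over naturals
  have hsum : ∀ n : ℕ, ∑ i ∈ Finset.range n, F ((i:ℝ) + 1) ≤ ∫ t in Ioi (0:ℝ), F t := by
    intro n
    have hIntnonneg : 0 ≤ ∫ t in Ioi (0:ℝ), F t :=
      setIntegral_nonneg measurableSet_Ioi fun x hx => aux_nonneg ha.le hx
    cases n with
    | zero => simpa using hIntnonneg
    | succ k =>
      have h1k : (1:ℝ) ≤ 1 + (k:ℕ) := le_add_of_nonneg_right (Nat.cast_nonneg k)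
      have hanti : AntitoneOn F (Icc (1:ℝ) (1 + (k:ℕ))) := fun x hx y _ hxy =>
        aux_anti ha.le hp0.le (lt_of_lt_of_le one_pos hx.1) hxy
      have hkey := hanti.sum_le_integral
      have hIoc0 : IntegrableOn F (Ioc 0 1) := hIntF.mono_set Ioc_subset_Ioi_self
      have hIoc1 : IntegrableOn F (Ioc 1 (1 + (k:ℕ))) :=
        hIntF.mono_set (Ioc_subset_Ioi_self.trans (Ioi_subset_Ioi zero_le_one))
      have hF1 : F 1 ≤ ∫ t in Ioc (0:ℝ) 1, F t := by
        have := setIntegral_ge_of_const_le (μ := volume) (c := F 1) measurableSet_Ioc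
          (by simp) (fun x hx => aux_anti ha.le hp0.le hx.1 hx.2) hIoc0
        simpa using this
      calc ∑ i ∈ Finset.range (k+1), F ((i:ℝ) + 1)
          = (∑ i ∈ Finset.range k, F (((i+1:ℕ):ℝ) + 1)) + F (((0:ℕ):ℝ) + 1) :=
            Finset.sum_range_succ' (fun i => F ((i:ℝ) + 1)) k
        _ ≤ (∫ x in (1:ℝ)..(1 + (k:ℕ)), F x) + ∫ t in Ioc (0:ℝ) 1, F t := by
            apply add_le_add
            · refine le_trans (le_of_eq ?_) hkey
              refine Finset.sum_congr rfl fun i _ => ?_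
              congr 1
              push_cast
              ring
            · simpa using hF1
        _ = (∫ t in Ioc (0:ℝ) 1, F t) + ∫ t in Ioc (1:ℝ) (1 + (k:ℕ)), F t := by
            rw [intervalIntegral.integral_of_le h1k]
            ring
        _ = ∫ t in Ioc (0:ℝ) (1 + (k:ℕ)), F t := by
            rw [← setIntegral_union (Ioc_disjoint_Ioc_of_le le_rfl) measurableSet_Ioc hIoc0 hIoc1,
              Ioc_union_Ioc_eq_Ioc zero_le_one h1k]
        _ ≤ ∫ t in Ioi (0:ℝ), F t := by
            apply setIntegral_mono_set hIntF
            · exact (ae_restrict_iff' measurableSet_Ioi).mpr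
                (ae_of_all _ fun x hx => aux_nonneg ha.le hx)
            · exact HasSubset.Subset.eventuallyLE Ioc_subset_Ioi_self
  refine ⟨hIntf, ?_⟩
  have hre : ∑' j : ℕ+, F (((j:ℕ):ℝ)) = ∑' n : ℕ, F ((n:ℝ) + 1) := by
    rw [← Equiv.tsum_eq Equiv.pnatEquivNat.symm (fun j : ℕ+ => F (((j:ℕ):ℝ)))]
    refine tsum_congr fun n => ?_
    have hx : (((Equiv.pnatEquivNat.symm n : ℕ+) : ℕ) : ℝ) = (n:ℝ) + 1 := by
      simp [Equiv.pnatEquivNat, Nat.succPNat]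
    rw [hx]
  calc ∑' j : ℕ+, F (((j:ℕ):ℝ))
      = ∑' n : ℕ, F ((n:ℝ) + 1) := hre
    _ ≤ ∫ t in Ioi (0:ℝ), F t :=
        Real.tsum_le_of_sum_range_le (fun n => aux_nonneg ha.le (by positivity)) hsum
    _ = c * ∫ s in Ioi (0:ℝ), f s := hchange
    _ = (C ^ q * ∫ s in Ioi (0:ℝ), f s) * h ^ (-((d:ℝ) - 1)) * δ ^ (-q) := by
        rw [hceq]; ring
end

section
/- Let K be a trace-class operator on a Hilbert space whose singular values satisfy μ_j(K) ≤ C δ^{-1} (h j^{1/(d-1)})^{-2m} for all j ≥ 1, where C, h, δ > 0, δ ≤ 1, d ≥ 2 and 2m > d - 1. Then log|det(I + K)| ≤ C' h^{-(d-1)} δ^{-(d-1)/(2m)} for some constant C' depending only on C, m, d. -/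
open Real

-- telescoping step: (s-1) j^{-s} ≤ (j-1)^{1-s} - j^{1-s}
lemma step_ineq (s : ℝ) (hs : 1 < s) (j : ℕ) (hj : 2 ≤ j) :
    (s - 1) * (j : ℝ) ^ (-s) ≤ ((j : ℝ) - 1) ^ (1 - s) - (j : ℝ) ^ (1 - s) := by
  have ha : (2:ℝ) ≤ (j:ℝ) := by exact_mod_cast hj
  set a : ℝ := (j:ℝ) with hadef
  have ha0 : 0 < a := by linarith
  set t : ℝ := 1/a with htdef
  have ht0 : 0 < t := by positivity
  have ht1 : t < 1 := by rw [htdef, div_lt_one ha0]; linarith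
  set q : ℝ := s - 1 with hqdef
  have hq0 : 0 < q := by linarith
  have h1t : 0 < 1 - t := by linarith
  -- key : (1 + q*t) * (1-t)^q ≤ 1
  have hkey : (1 + q*t) * (1-t)^q ≤ 1 := by
    have e1 : (1-t)^q ≤ Real.exp (-(q*t)) := by
      rw [Real.rpow_def_of_pos h1t]
      apply Real.exp_le_exp.2
      have := Real.log_le_sub_one_of_pos h1t
      nlinarith
    have e2 : 1 + q*t ≤ Real.exp (q*t) := by
      have := Real.add_one_le_exp (q*t); linarith
    calc (1 + q*t) * (1-t)^q ≤ Real.exp (q*t) * Real.exp (-(q*t)) := by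
          apply mul_le_mul e2 e1 (by positivity) (Real.exp_pos _).le
      _ = 1 := by rw [← Real.exp_add]; simp
  have hpow0 : (0:ℝ) < (1-t)^q := Real.rpow_pos_of_pos h1t q
  have hkey2 : 1 + q*t ≤ (1-t)^(-q) := by
    rw [Real.rpow_neg h1t.le]
    have h := mul_le_mul_of_nonneg_right hkey (inv_nonneg.2 hpow0.le)
    rwa [mul_assoc, mul_inv_cancel₀ hpow0.ne', mul_one, one_mul] at h
  have hat : a * t = 1 := by rw [htdef]; field_simp
  have ha1 : a - 1 = a * (1-t) := by rw [mul_sub, mul_one, hat]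
  have e3 : (a - 1) ^ (1-s) = a^(-q) * (1-t)^(-q) := by
    rw [ha1, show (1:ℝ)-s = -q by rw [hqdef]; ring, Real.mul_rpow ha0.le h1t.le]
  have e4 : a ^ (1-s) = a ^ (-q) := by rw [show (1:ℝ)-s = -q by rw [hqdef]; ring]
  have e5 : a ^ (-s) = a^(-q) * t := by
    rw [show -s = -q + (-1) by rw [hqdef]; ring, Real.rpow_add ha0, Real.rpow_neg_one,
      ← one_div, ← htdef]
  have hq' : (0:ℝ) < a^(-q) := Real.rpow_pos_of_pos ha0 _
  rw [e3, e4, e5]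
  have := mul_le_mul_of_nonneg_left hkey2 hq'.le
  nlinarith

-- tail sum: ∑_{j=N+1}^{M-1} j^{-s} ≤ N^{1-s}/(s-1)
lemma tail_sum (s : ℝ) (hs : 1 < s) (N : ℕ) (hN : 1 ≤ N) (M : ℕ) :
    ∑ j ∈ Finset.Ico (N+1) M, ((j : ℕ) : ℝ) ^ (-s) ≤ (N : ℝ) ^ (1-s) / (s-1) := by
  have key : ∀ t : ℕ, (s-1) * ∑ j ∈ Finset.Ico (N+1) (N+1+t), ((j:ℕ):ℝ) ^ (-s)
      ≤ (N:ℝ)^(1-s) - ((N+t : ℕ):ℝ)^(1-s) := by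
    intro t
    induction t with
    | zero => simp
    | succ t ih =>
      rw [show N+1+(t+1) = (N+1+t)+1 by ring, Finset.sum_Ico_succ_top (by omega)]
      have hstep := step_ineq s hs (N+1+t) (by omega)
      have hc : ((N+1+t : ℕ):ℝ) - 1 = ((N+t : ℕ):ℝ) := by push_cast; ring
      rw [hc] at hstep
      have hc2 : ((N+(t+1) : ℕ):ℝ) = ((N+1+t : ℕ):ℝ) := by push_cast; ring
      rw [hc2, mul_add]
      linarith
  rcases le_or_gt M (N+1) with hM | hM
  · rw [Finset.Ico_eq_empty (by omega)]
    simp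
    exact div_nonneg (by positivity) (by linarith)
  · have hMt : M = N+1+(M-(N+1)) := by omega
    rw [hMt]
    have := key (M-(N+1))
    have h1 : (0:ℝ) ≤ ((N+(M-(N+1)) : ℕ):ℝ)^(1-s) := by positivity
    rw [le_div_iff₀ (by linarith)]
    nlinarith

-- log((2n)!) - 2 log(n!) ≤ 2n log 2
lemma central_log (n : ℕ) :
    ∑ k ∈ Finset.range (2*n), Real.log ((k:ℝ)+1) - 2 * ∑ k ∈ Finset.range n, Real.log ((k:ℝ)+1)
      ≤ 2*(n:ℝ)*Real.log 2 := by
  induction n with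
  | zero => simp
  | succ n ih =>
    have h2 : 2*(n+1) = (2*n+1)+1 := by ring
    rw [h2, Finset.sum_range_succ, Finset.sum_range_succ, Finset.sum_range_succ]
    have key : Real.log (((2*n:ℕ):ℝ)+1) + Real.log (((2*n+1:ℕ):ℝ)+1) - 2*Real.log ((n:ℝ)+1)
        ≤ 2*Real.log 2 := by
      have hn1 : (0:ℝ) < (n:ℝ)+1 := by positivity
      have e2 : Real.log (((2*n+1:ℕ):ℝ)+1) = Real.log 2 + Real.log ((n:ℝ)+1) := by
        rw [← Real.log_mul (by norm_num) hn1.ne']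
        congr 1; push_cast; ring
      have e1 : Real.log (((2*n:ℕ):ℝ)+1) ≤ Real.log (((2*n+1:ℕ):ℝ)+1) := by
        apply Real.log_le_log (by positivity)
        push_cast; linarith
      rw [e2] at e1 ⊢
      linarith
    push_cast at key ⊢
    linarith

lemma head_bound (N : ℕ) (B : ℝ) (hB0 : 0 ≤ B) (hBN : B ≤ (N:ℝ)) :
    ∑ k ∈ Finset.range N, Real.log (1 + B/((k:ℝ)+1)) ≤ 2*(N:ℝ)*Real.log 2 := by
  have h1 : ∀ k ∈ Finset.range N, Real.log (1 + B/((k:ℝ)+1))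
      ≤ Real.log ((N:ℝ)+(k:ℝ)+1) - Real.log ((k:ℝ)+1) := by
    intro k _
    have hk1 : (0:ℝ) < (k:ℝ)+1 := by positivity
    have e1 : Real.log (1 + B/((k:ℝ)+1)) ≤ Real.log (1 + (N:ℝ)/((k:ℝ)+1)) := by
      apply Real.log_le_log (by positivity)
      gcongr
    have e2 : 1 + (N:ℝ)/((k:ℝ)+1) = ((N:ℝ)+(k:ℝ)+1)/((k:ℝ)+1) := by field_simp; ring
    rw [e2, Real.log_div (by positivity) hk1.ne'] at e1
    exact e1
  calc ∑ k ∈ Finset.range N, Real.log (1 + B/((k:ℝ)+1))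
      ≤ ∑ k ∈ Finset.range N, (Real.log ((N:ℝ)+(k:ℝ)+1) - Real.log ((k:ℝ)+1)) :=
        Finset.sum_le_sum h1
    _ = ∑ k ∈ Finset.range (2*N), Real.log ((k:ℝ)+1)
        - 2 * ∑ k ∈ Finset.range N, Real.log ((k:ℝ)+1) := by
        rw [Finset.sum_sub_distrib, two_mul, Finset.sum_range_add]
        have : ∀ x ∈ Finset.range N, Real.log (((N:ℕ):ℝ)+(x:ℝ)+1) = Real.log ((((N+x : ℕ)):ℝ)+1) := by
          intro x _; congr 1; push_cast; ring
        rw [Finset.sum_congr rfl this]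
        ring
    _ ≤ 2*(N:ℝ)*Real.log 2 := central_log N

lemma one_add_rpow_le (x p : ℝ) (hx : 0 ≤ x) (hp : 1 ≤ p) : 1 + x^p ≤ (1+x)^p := by
  rcases eq_or_lt_of_le hx with hx0 | hx0
  · rw [← hx0]
    rw [Real.zero_rpow (by linarith : p ≠ 0)]
    norm_num
  · have h1x : (1:ℝ) ≤ 1 + x := by linarith
    have e1 : (1:ℝ) ≤ (1+x)^(p-1) := Real.one_le_rpow h1x (by linarith)
    have e2 : x^(p-1) ≤ (1+x)^(p-1) := Real.rpow_le_rpow hx (by linarith) (by linarith)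
    have e3 : x^p = x^(p-1) * x := by
      rw [← Real.rpow_add_one hx0.ne' (p-1)]
      norm_num
    have e4 : (1+x)^p = (1+x)^(p-1) * (1+x) := by
      rw [← Real.rpow_add_one (by positivity : (1:ℝ)+x ≠ 0) (p-1)]
      norm_num
    rw [e3, e4]
    nlinarith

lemma key_sum (p : ℝ) (hp : 1 < p) :
    ∃ K : ℝ, 0 < K ∧ ∀ A : ℝ, 0 < A → ∀ M : ℕ,
      ∑ j ∈ Finset.Ico 1 M, Real.log (1 + A * ((j:ℕ):ℝ)^(-p)) ≤ K * A^(1/p) := by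
  have hl2 : (0:ℝ) < Real.log 2 := Real.log_pos (by norm_num)
  have hp1 : (0:ℝ) < p - 1 := by linarith
  have hK0 : (0:ℝ) < 4*p*Real.log 2 + 1/(p-1) + 2 := by
    have : (0:ℝ) < 1/(p-1) := by positivity
    nlinarith
  refine ⟨4*p*Real.log 2 + 1/(p-1) + 2, hK0, ?_⟩
  intro A hA M
  set B : ℝ := A^(1/p) with hBdef
  have hB0 : 0 < B := Real.rpow_pos_of_pos hA _
  have hBp : B^p = A := by
    rw [hBdef, ← Real.rpow_mul hA.le, one_div, inv_mul_cancel₀ (by linarith : p ≠ 0),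
      Real.rpow_one]
  have hnn : ∀ j : ℕ, 0 ≤ Real.log (1 + A * ((j:ℕ):ℝ)^(-p)) := by
    intro j
    apply Real.log_nonneg
    have : 0 ≤ A * ((j:ℕ):ℝ)^(-p) := by positivity
    linarith
  have hterm_le : ∀ j : ℕ, Real.log (1 + A * ((j:ℕ):ℝ)^(-p)) ≤ A * ((j:ℕ):ℝ)^(-p) := by
    intro j
    have h0 : 0 ≤ A * ((j:ℕ):ℝ)^(-p) := by positivity
    have := Real.log_le_sub_one_of_pos (by linarith : (0:ℝ) < 1 + A * ((j:ℕ):ℝ)^(-p))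
    linarith
  have tail_est : ∀ (N M' : ℕ), 1 ≤ N → (B ≤ (N:ℝ)) →
      ∑ j ∈ Finset.Ico (N+1) M', Real.log (1 + A * ((j:ℕ):ℝ)^(-p)) ≤ B/(p-1) := by
    intro N M' hN1 hBN
    calc ∑ j ∈ Finset.Ico (N+1) M', Real.log (1 + A * ((j:ℕ):ℝ)^(-p))
        ≤ ∑ j ∈ Finset.Ico (N+1) M', A * ((j:ℕ):ℝ)^(-p) :=
          Finset.sum_le_sum fun j _ => hterm_le j
      _ = A * ∑ j ∈ Finset.Ico (N+1) M', ((j:ℕ):ℝ)^(-p) := by rw [Finset.mul_sum]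
      _ ≤ A * ((N:ℝ)^(1-p)/(p-1)) := by
          apply mul_le_mul_of_nonneg_left (tail_sum p hp N hN1 M') hA.le
      _ ≤ B/(p-1) := by
          rw [mul_div_assoc' A _ _]
          have h1 : ((N:ℝ))^(1-p) ≤ B^(1-p) :=
            Real.rpow_le_rpow_of_nonpos hB0 hBN (by linarith)
          have hnum : A * (N:ℝ)^(1-p) ≤ B := by
            calc A * (N:ℝ)^(1-p) ≤ A * B^(1-p) := by
                  exact mul_le_mul_of_nonneg_left h1 hA.le
              _ = B := by rw [← hBp, ← Real.rpow_add hB0]; norm_num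
          gcongr
  rcases le_or_gt A 1 with hA1 | hA1
  · -- small A
    have hB1 : B ≤ 1 := Real.rpow_le_one hA.le hA1 (by positivity)
    have hAB : A ≤ B := by
      calc A = B^p := hBp.symm
        _ ≤ B^(1:ℝ) := Real.rpow_le_rpow_of_exponent_ge hB0 hB1 (by linarith)
        _ = B := Real.rpow_one B
    have hc1 : (0:ℝ) < 1/(p-1) := by positivity
    have hsum : ∑ j ∈ Finset.Ico 1 M, Real.log (1 + A * ((j:ℕ):ℝ)^(-p))
        ≤ A * (1 + 1/(p-1)) := by
      calc ∑ j ∈ Finset.Ico 1 M, Real.log (1 + A * ((j:ℕ):ℝ)^(-p))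
          ≤ ∑ j ∈ Finset.Ico 1 M, A * ((j:ℕ):ℝ)^(-p) :=
            Finset.sum_le_sum fun j _ => hterm_le j
        _ = A * ∑ j ∈ Finset.Ico 1 M, ((j:ℕ):ℝ)^(-p) := by rw [Finset.mul_sum]
        _ ≤ A * (1 + 1/(p-1)) := by
            apply mul_le_mul_of_nonneg_left ?_ hA.le
            rcases le_or_gt M 1 with hM | hM
            · rw [Finset.Ico_eq_empty (by omega)]
              simp
              positivity
            · rw [Finset.sum_eq_sum_Ico_succ_bot hM]
              have ht := tail_sum p hp 1 le_rfl M
              simp only [Nat.cast_one, Real.one_rpow] at ht ⊢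
              linarith
    have h2 : A * (1 + 1/(p-1)) ≤ B * (1 + 1/(p-1)) :=
      mul_le_mul_of_nonneg_right hAB (by linarith)
    have h3 : B * (1 + 1/(p-1)) ≤ B * (4*p*Real.log 2 + 1/(p-1) + 2) := by
      apply mul_le_mul_of_nonneg_left ?_ hB0.le
      nlinarith
    calc ∑ j ∈ Finset.Ico 1 M, Real.log (1 + A * ((j:ℕ):ℝ)^(-p))
        ≤ A * (1 + 1/(p-1)) := hsum
      _ ≤ B * (4*p*Real.log 2 + 1/(p-1) + 2) := le_trans h2 h3
      _ = (4*p*Real.log 2 + 1/(p-1) + 2) * B := by ring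
  · -- large A
    have hB1 : 1 < B := by
      rw [hBdef]
      exact (Real.one_lt_rpow_iff_of_pos hA).2 (Or.inl ⟨hA1, by positivity⟩)
    set N : ℕ := ⌈B⌉₊ with hNdef
    have hN1 : 1 ≤ N := Nat.ceil_pos.mpr hB0
    have hBN : B ≤ (N:ℝ) := Nat.le_ceil B
    have hN2B : (N:ℝ) ≤ 2*B := by
      have := Nat.ceil_lt_add_one hB0.le
      linarith
    set M' : ℕ := max M (N+1) with hM'def
    have hsub : ∑ j ∈ Finset.Ico 1 M, Real.log (1 + A * ((j:ℕ):ℝ)^(-p))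
        ≤ ∑ j ∈ Finset.Ico 1 M', Real.log (1 + A * ((j:ℕ):ℝ)^(-p)) :=
      Finset.sum_le_sum_of_subset_of_nonneg
        (Finset.Ico_subset_Ico le_rfl (le_max_left _ _)) (fun j _ _ => hnn j)
    have hsplit : ∑ j ∈ Finset.Ico 1 (N+1), Real.log (1 + A * ((j:ℕ):ℝ)^(-p))
        + ∑ j ∈ Finset.Ico (N+1) M', Real.log (1 + A * ((j:ℕ):ℝ)^(-p))
        = ∑ j ∈ Finset.Ico 1 M', Real.log (1 + A * ((j:ℕ):ℝ)^(-p)) :=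
      Finset.sum_Ico_consecutive _ (by omega) (le_max_right _ _)
    have hhead : ∑ j ∈ Finset.Ico 1 (N+1), Real.log (1 + A * ((j:ℕ):ℝ)^(-p))
        ≤ 4*p*Real.log 2 * B := by
      have hterm : ∀ j ∈ Finset.Ico 1 (N+1), Real.log (1 + A * ((j:ℕ):ℝ)^(-p))
          ≤ p * Real.log (1 + B/((j:ℕ):ℝ)) := by
        intro j hj
        simp only [Finset.mem_Ico] at hj
        have hj0 : (0:ℝ) < (j:ℝ) := by exact_mod_cast hj.1
        have hdiv0 : (0:ℝ) ≤ B/(j:ℝ) := by positivity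
        have he : A * ((j:ℕ):ℝ)^(-p) = (B/(j:ℝ))^p := by
          rw [Real.div_rpow hB0.le hj0.le, hBp, Real.rpow_neg hj0.le, div_eq_mul_inv]
        rw [he]
        have h1 := one_add_rpow_le (B/(j:ℝ)) p hdiv0 hp.le
        calc Real.log (1 + (B/(j:ℝ))^p) ≤ Real.log ((1+B/(j:ℝ))^p) :=
              Real.log_le_log (by positivity) h1
          _ = p * Real.log (1 + B/(j:ℝ)) := Real.log_rpow (by linarith) p
      calc ∑ j ∈ Finset.Ico 1 (N+1), Real.log (1 + A * ((j:ℕ):ℝ)^(-p))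
          ≤ ∑ j ∈ Finset.Ico 1 (N+1), p * Real.log (1 + B/((j:ℕ):ℝ)) :=
            Finset.sum_le_sum hterm
        _ = p * ∑ k ∈ Finset.range N, Real.log (1 + B/((k:ℝ)+1)) := by
            rw [← Finset.mul_sum]
            congr 1
            rw [Finset.sum_Ico_eq_sum_range]
            simp only [Nat.add_sub_cancel]
            apply Finset.sum_congr rfl
            intro k _
            congr 2
            push_cast; ring
        _ ≤ p * (2*(N:ℝ)*Real.log 2) :=
            mul_le_mul_of_nonneg_left (head_bound N B hB0.le hBN) (by linarith)
        _ ≤ 4*p*Real.log 2 * B := by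
            have hh := mul_le_mul_of_nonneg_left hN2B
              (by positivity : (0:ℝ) ≤ 2*p*Real.log 2)
            nlinarith
    have htail := tail_est N M' hN1 hBN
    have hBdiv : B/(p-1) = (1/(p-1))*B := by ring
    calc ∑ j ∈ Finset.Ico 1 M, Real.log (1 + A * ((j:ℕ):ℝ)^(-p))
        ≤ ∑ j ∈ Finset.Ico 1 M', Real.log (1 + A * ((j:ℕ):ℝ)^(-p)) := hsub
      _ = ∑ j ∈ Finset.Ico 1 (N+1), Real.log (1 + A * ((j:ℕ):ℝ)^(-p))
          + ∑ j ∈ Finset.Ico (N+1) M', Real.log (1 + A * ((j:ℕ):ℝ)^(-p)) := hsplit.symm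
      _ ≤ 4*p*Real.log 2 * B + B/(p-1) := add_le_add hhead htail
      _ ≤ (4*p*Real.log 2 + 1/(p-1) + 2) * B := by rw [hBdiv]; nlinarith

/-- Lemma 3.4 (estimate (3.11)) in abstract form. `μ j` are the singular values of a
trace-class operator `K`, and `Det = |det(I+K)|` is the modulus of its Fredholm
determinant, which satisfies `log Det ≤ ∑_j log(1 + μ_j(K))`. If
`μ_j(K) ≤ C δ⁻¹ (h j^{1/(d-1)})^{-2m}` with `2m > d-1`, then
`log|det(I+K)| ≤ C' h^{-(d-1)} δ^{-(d-1)/(2m)}` with `C'` depending only on `C, m, d`. -/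
theorem stmt_4 (C : ℝ) (hC : 0 < C) (d m : ℕ) (hd : 2 ≤ d) (h2m : (d : ℝ) - 1 < 2 * m) :
    ∃ C' : ℝ, 0 < C' ∧ ∀ (h δ : ℝ), 0 < h → 0 < δ → δ ≤ 1 →
      ∀ (μ : ℕ+ → ℝ) (Det : ℝ),
        (∀ j, 0 ≤ μ j) →
        (∀ j : ℕ+, μ j ≤ C * δ⁻¹ *
          (h * ((j : ℕ) : ℝ) ^ ((1 : ℝ) / ((d : ℝ) - 1))) ^ (-(2 * (m : ℝ)))) →
        Real.log Det ≤ ∑' j : ℕ+, Real.log (1 + μ j) →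
        Real.log Det ≤ C' * h ^ (-((d : ℝ) - 1)) * δ ^ (-(((d : ℝ) - 1) / (2 * (m : ℝ)))) := by
  have hd1 : (1:ℝ) ≤ (d:ℝ) - 1 := by
    have : (2:ℝ) ≤ (d:ℝ) := by exact_mod_cast hd
    linarith
  have hd0 : (0:ℝ) < (d:ℝ) - 1 := by linarith
  have hm0 : (0:ℝ) < 2*(m:ℝ) := by linarith
  set p : ℝ := 2*(m:ℝ)/((d:ℝ)-1) with hpdef
  have hp : 1 < p := (one_lt_div hd0).2 h2m
  have hp0 : (0:ℝ) < p := by linarith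
  obtain ⟨K, hK0, hK⟩ := key_sum p hp
  refine ⟨K * C^(1/p), by positivity, ?_⟩
  intro h δ hh hδ hδ1 μ Det hμ0 hμb hDet
  set A : ℝ := C * δ⁻¹ * h^(-(2*(m:ℝ))) with hAdef
  have hh2m : (0:ℝ) < h^(-(2*(m:ℝ))) := Real.rpow_pos_of_pos hh _
  have hA0 : 0 < A := by rw [hAdef]; positivity
  have hbound : ∀ j : ℕ+, μ j ≤ A * (((j:ℕ):ℝ))^(-p) := by
    intro j
    have hj0 : (0:ℝ) < ((j:ℕ):ℝ) := by exact_mod_cast j.pos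
    have he : (h * ((j:ℕ):ℝ) ^ ((1:ℝ)/((d:ℝ)-1))) ^ (-(2*(m:ℝ)))
        = h^(-(2*(m:ℝ))) * ((j:ℕ):ℝ)^(-p) := by
      rw [Real.mul_rpow hh.le (Real.rpow_nonneg hj0.le _), ← Real.rpow_mul hj0.le]
      congr 2
      rw [hpdef]; ring
    have := hμb j
    rw [he] at this
    calc μ j ≤ C * δ⁻¹ * (h^(-(2*(m:ℝ))) * ((j:ℕ):ℝ)^(-p)) := this
      _ = A * (((j:ℕ):ℝ))^(-p) := by rw [hAdef]; ring
  have hfin : ∀ s : Finset ℕ+, ∑ j ∈ s, Real.log (1 + μ j) ≤ K * A^(1/p) := by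
    intro s
    set M : ℕ := (s.sup (fun j : ℕ+ => (j:ℕ))) + 1 with hM
    have step1 : ∑ j ∈ s, Real.log (1 + μ j)
        ≤ ∑ j ∈ s, Real.log (1 + A * (((j:ℕ):ℝ))^(-p)) := by
      apply Finset.sum_le_sum
      intro j _
      apply Real.log_le_log (by have := hμ0 j; linarith)
      linarith [hbound j]
    have step2 : ∑ j ∈ s, Real.log (1 + A * (((j:ℕ):ℝ))^(-p))
        = ∑ n ∈ s.image (fun j : ℕ+ => (j:ℕ)), Real.log (1 + A * ((n:ℕ):ℝ)^(-p)) := by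
      rw [Finset.sum_image]
      intro a _ b _ hab
      exact PNat.coe_injective hab
    have step3 : s.image (fun j : ℕ+ => (j:ℕ)) ⊆ Finset.Ico 1 M := by
      intro n hn
      simp only [Finset.mem_image] at hn
      obtain ⟨j, hj, rfl⟩ := hn
      simp only [Finset.mem_Ico]
      exact ⟨j.one_le, by rw [hM]; exact Nat.lt_succ_of_le (Finset.le_sup hj)⟩
    have step4 : ∑ n ∈ s.image (fun j : ℕ+ => (j:ℕ)), Real.log (1 + A * ((n:ℕ):ℝ)^(-p))
        ≤ ∑ n ∈ Finset.Ico 1 M, Real.log (1 + A * ((n:ℕ):ℝ)^(-p)) := by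
      apply Finset.sum_le_sum_of_subset_of_nonneg step3
      intro n _ _
      apply Real.log_nonneg
      have : 0 ≤ A * ((n:ℕ):ℝ)^(-p) := by positivity
      linarith
    calc ∑ j ∈ s, Real.log (1 + μ j)
        ≤ ∑ n ∈ Finset.Ico 1 M, Real.log (1 + A * ((n:ℕ):ℝ)^(-p)) :=
          le_trans step1 (le_trans (le_of_eq step2) step4)
      _ ≤ K * A^(1/p) := hK A hA0 M
  have hA1p : K * A^(1/p) = K * C^(1/p) * h^(-((d:ℝ)-1)) * δ^(-(((d:ℝ)-1)/(2*(m:ℝ)))) := by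
    rw [hAdef, Real.mul_rpow (by positivity) hh2m.le,
        Real.mul_rpow hC.le (by positivity)]
    have e1 : (h^(-(2*(m:ℝ))))^(1/p) = h^(-((d:ℝ)-1)) := by
      rw [← Real.rpow_mul hh.le]
      congr 1
      rw [hpdef]; field_simp; ring_nf; simp [show (m:ℝ) ≠ 0 by intro h0; rw [h0] at hm0; linarith]
    have e2 : (δ⁻¹)^(1/p) = δ^(-(((d:ℝ)-1)/(2*(m:ℝ)))) := by
      rw [← Real.rpow_neg_one δ, ← Real.rpow_mul hδ.le]
      congr 1
      rw [hpdef]; field_simp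
    rw [e1, e2]; ring
  calc Real.log Det ≤ ∑' j : ℕ+, Real.log (1 + μ j) := hDet
    _ ≤ K * A^(1/p) := tsum_le_of_sum_le' (by positivity) hfin
    _ = K * C^(1/p) * h^(-((d:ℝ)-1)) * δ^(-(((d:ℝ)-1)/(2*(m:ℝ)))) := hA1p
end

section
/- Let g be a function meromorphic on a neighborhood of the closed disc of radius 4θ centered at w₀ ∈ ℂ, with zeros {z_k} (counted with multiplicity) in the disc of radius 2θ and poles {y_k} (counted with multiplicity) in the disc of radius 4θ, and suppose the number of poles is at most P. Assume: (i) log|g(w₀)| ≥ -A with dist(w₀, {y_k}) ≥ δ > 0, δ ≤ 1; (ii) log|g(z)| ≤ A on the circle of some radius μ ∈ (3θ, 4θ) with dist to poles ≥ δ. Then the number of zeros of g in the disc of radius 2θ is at most C(A + P·(log(1/δ) + log(1/θ) + θ + 1)) for a constant C depending only on the ratio μ/θ. -/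
open Metric Finset

/-- Jensen-theorem counting argument behind (3.27). The meromorphic function `g` is
encoded as `g z = f z / ∏ᵢ (z - y i)` where `f` is analytic on the closed disc of
radius `4θ` about `w₀` and the `y i` (at most `P` of them, with multiplicity) are the
poles of `g` in that disc; the zeros of `g` in the disc of radius `2θ` (with
multiplicity) are encoded by writing `f z = hfun z * ∏ᵢ (z - zk i)` with `hfun`
analytic. Under the bounds (i) `log|g(w₀)| ≥ -A` with `dist(w₀, poles) ≥ δ`, and
(ii) `log|g| ≤ A` on a circle of radius `μ = ρ θ` (with `3 < ρ < 4`) staying at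
distance `≥ δ` from the poles, the number `n` of zeros is at most
`C (A + P (log(1/δ) + log(1/θ) + θ + 1))`, with `C` depending only on the ratio `ρ = μ/θ`. -/
theorem stmt_8 (ρ : ℝ) (hρ1 : 3 < ρ) (hρ2 : ρ < 4) :
    ∃ C : ℝ, 0 < C ∧
      ∀ (θ : ℝ), 0 < θ →
      ∀ (w₀ : ℂ) (A δ : ℝ) (P n : ℕ) (f hfun : ℂ → ℂ)
        (y : Fin P → ℂ) (zk : Fin n → ℂ),
        0 ≤ A → 0 < δ → δ ≤ 1 →
        AnalyticOn ℂ f (closedBall w₀ (4 * θ)) →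
        AnalyticOn ℂ hfun (closedBall w₀ (4 * θ)) →
        (∀ i, y i ∈ closedBall w₀ (4 * θ)) →
        (∀ i, zk i ∈ closedBall w₀ (2 * θ)) →
        (∀ z ∈ closedBall w₀ (4 * θ), f z = hfun z * ∏ i, (z - zk i)) →
        f w₀ ≠ 0 →
        (∀ i, δ ≤ ‖w₀ - y i‖) →
        (-A ≤ Real.log ‖f w₀ / ∏ i, (w₀ - y i)‖) →
        (∀ z ∈ sphere w₀ (ρ * θ),
          (∀ i, δ ≤ ‖z - y i‖) ∧ Real.log ‖f z / ∏ i, (z - y i)‖ ≤ A) →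
        (n : ℝ) ≤ C * (A + (P : ℝ) * (Real.log (1 / δ) + Real.log (1 / θ) + θ + 1)) := by
  have h32 : (1:ℝ) < ρ / 2 := by linarith
  have hlg : 0 < Real.log (ρ / 2) := Real.log_pos h32
  refine ⟨4 / Real.log (ρ / 2), by positivity, ?_⟩
  intro θ hθ w₀ A δ P n f hfun y zk hA hδ hδ1 hf hh hy hzk hfac hf0 hwy hlow hsph
  set R : ℝ := ρ * θ with hRdef
  have hR : 0 < R := by positivity
  have hR4 : R ≤ 4 * θ := by nlinarith
  set M : ℝ := Real.exp A * (8 * θ) ^ P with hMdef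
  set m : ℝ := Real.exp (-A) * δ ^ P with hmdef
  have hMpos : 0 < M := by positivity
  have hmpos : 0 < m := by positivity
  -- lower bound on pole-distance products
  have hprodlb : ∀ z : ℂ, (∀ i, δ ≤ ‖z - y i‖) → δ ^ P ≤ ∏ i, ‖z - y i‖ := by
    intro z hz
    calc δ ^ P = ∏ _i : Fin P, δ := by
          rw [Finset.prod_const, Finset.card_univ, Fintype.card_fin]
      _ ≤ ∏ i, ‖z - y i‖ := Finset.prod_le_prod (fun _ _ => hδ.le) (fun i _ => hz i)
  have hprodpos : ∀ z : ℂ, (∀ i, δ ≤ ‖z - y i‖) → 0 < ∏ i, ‖z - y i‖ := by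
    intro z hz
    exact lt_of_lt_of_le (by positivity) (hprodlb z hz)
  -- lower bound at the center : m ≤ ‖f w₀‖
  have hlowf : m ≤ ‖f w₀‖ := by
    have hpp : 0 < ∏ i, ‖w₀ - y i‖ := hprodpos w₀ hwy
    have hq : ‖f w₀ / ∏ i, (w₀ - y i)‖ = ‖f w₀‖ / ∏ i, ‖w₀ - y i‖ := by
      rw [norm_div, norm_prod]
    have hqpos : 0 < ‖f w₀‖ / ∏ i, ‖w₀ - y i‖ := by
      apply div_pos _ hpp
      exact norm_pos_iff.mpr hf0
    have : Real.exp (-A) ≤ ‖f w₀‖ / ∏ i, ‖w₀ - y i‖ := by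
      have := Real.exp_le_exp.mpr hlow
      rwa [hq, Real.exp_log hqpos] at this
    have h2 : Real.exp (-A) * δ ^ P ≤ (‖f w₀‖ / ∏ i, ‖w₀ - y i‖) * ∏ i, ‖w₀ - y i‖ :=
      mul_le_mul this (hprodlb w₀ hwy) (by positivity) hqpos.le
    rwa [div_mul_cancel₀ _ (ne_of_gt hpp)] at h2
  -- upper bound on the sphere : ‖f z‖ ≤ M
  have hupf : ∀ z ∈ sphere w₀ R, ‖f z‖ ≤ M := by
    intro z hz
    obtain ⟨hzy, hzlog⟩ := hsph z hz
    have hpp : 0 < ∏ i, ‖z - y i‖ := hprodpos z hzy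
    have hq : ‖f z / ∏ i, (z - y i)‖ = ‖f z‖ / ∏ i, ‖z - y i‖ := by
      rw [norm_div, norm_prod]
    have hqA : ‖f z‖ / ∏ i, ‖z - y i‖ ≤ Real.exp A := by
      rcases eq_or_lt_of_le (norm_nonneg (f z)) with h0 | h0
      · rw [← h0, zero_div]; positivity
      · have hqpos : 0 < ‖f z‖ / ∏ i, ‖z - y i‖ := div_pos h0 hpp
        have := Real.exp_le_exp.mpr hzlog
        rwa [hq, Real.exp_log hqpos] at this
    have hdzw : ‖z - w₀‖ = R := mem_sphere_iff_norm.mp hz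
    have hyub : ∏ i, ‖z - y i‖ ≤ (8 * θ) ^ P := by
      calc ∏ i, ‖z - y i‖ ≤ ∏ _i : Fin P, (8 * θ) := by
            apply Finset.prod_le_prod (fun i _ => norm_nonneg _)
            intro i _
            have h1 : ‖z - y i‖ ≤ ‖z - w₀‖ + ‖w₀ - y i‖ := by
              simpa [dist_eq_norm] using dist_triangle z w₀ (y i)
            have h2 : ‖w₀ - y i‖ ≤ 4 * θ := by
              have := hy i
              rw [mem_closedBall, dist_comm, dist_eq_norm] at this
              exact this
            rw [hdzw] at h1
            nlinarith
        _ = (8 * θ) ^ P := by rw [Finset.prod_const, Finset.card_univ, Fintype.card_fin]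
    have : ‖f z‖ = (‖f z‖ / ∏ i, ‖z - y i‖) * ∏ i, ‖z - y i‖ :=
      (div_mul_cancel₀ _ (ne_of_gt hpp)).symm
    rw [this]
    exact mul_le_mul hqA hyub hpp.le (Real.exp_pos A).le
  -- the auxiliary function
  set F : ℂ → ℂ := fun z =>
    hfun z * ∏ i, ((R : ℂ) ^ 2 - (starRingEnd ℂ) (zk i - w₀) * (z - w₀)) with hFdef
  have hFdiff : DifferentiableOn ℂ F (closedBall w₀ R) := by
    apply DifferentiableOn.mul
    · exact (hh.mono (closedBall_subset_closedBall hR4)).differentiableOn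
    · apply Differentiable.differentiableOn
      apply Differentiable.fun_finsetProd
      intro i _
      exact (differentiable_const _).sub
        (((differentiable_id.sub_const w₀)).const_mul ((starRingEnd ℂ) (zk i - w₀)))
  have hFc : DiffContOnCl ℂ F (ball w₀ R) := by
    apply DifferentiableOn.diffContOnCl
    rwa [closure_ball w₀ hR.ne']
  -- norm of F on the sphere
  have hFsphere : ∀ z ∈ sphere w₀ R, ‖F z‖ ≤ R ^ n * M := by
    intro z hz
    have hdzw : ‖z - w₀‖ = R := mem_sphere_iff_norm.mp hz
    have hz4 : z ∈ closedBall w₀ (4 * θ) := by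
      rw [mem_closedBall, dist_eq_norm]
      rw [hdzw]; exact hR4
    have hmc : (z - w₀) * (starRingEnd ℂ) (z - w₀) = (R : ℂ) ^ 2 := by
      rw [Complex.mul_conj]
      rw [Complex.normSq_eq_norm_sq, hdzw]
      push_cast
      ring
    have hfactor : ∀ i : Fin n,
        (R : ℂ) ^ 2 - (starRingEnd ℂ) (zk i - w₀) * (z - w₀)
          = (z - w₀) * (starRingEnd ℂ) (z - zk i) := by
      intro i
      have hc : (starRingEnd ℂ) (z - zk i)
          = (starRingEnd ℂ) (z - w₀) - (starRingEnd ℂ) (zk i - w₀) := by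
        rw [← map_sub]; congr 1; ring
      linear_combination -hmc - (z - w₀) * hc
    have hFz : ‖F z‖ = R ^ n * ‖f z‖ := by
      rw [hFdef]
      simp only
      rw [norm_mul, norm_prod]
      have : ∀ i ∈ (univ : Finset (Fin n)),
          ‖(R : ℂ) ^ 2 - (starRingEnd ℂ) (zk i - w₀) * (z - w₀)‖ = R * ‖z - zk i‖ := by
        intro i _
        rw [hfactor i, norm_mul, RCLike.norm_conj, hdzw]
      rw [Finset.prod_congr rfl this, Finset.prod_mul_distrib, Finset.prod_const,
        Finset.card_univ, Fintype.card_fin, hfac z hz4, norm_mul, norm_prod]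
      ring
    rw [hFz]
    exact mul_le_mul_of_nonneg_left (hupf z hz) (by positivity)
  -- maximum modulus principle
  have hFw₀ : ‖F w₀‖ ≤ R ^ n * M := by
    apply Complex.norm_le_of_forall_mem_frontier_norm_le isBounded_ball hFc
    · intro z hz
      rw [frontier_ball w₀ hR.ne'] at hz
      exact hFsphere z hz
    · rw [closure_ball w₀ hR.ne']
      exact mem_closedBall_self hR.le
  -- compute ‖F w₀‖
  have hFw₀eq : ‖F w₀‖ = ‖hfun w₀‖ * (R ^ 2) ^ n := by
    rw [hFdef]
    simp only [sub_self, mul_zero, sub_zero]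
    rw [norm_mul, norm_prod]
    congr 1
    rw [Finset.prod_congr rfl (fun i _ => by
      rw [norm_pow, Complex.norm_real, Real.norm_eq_abs, abs_of_pos hR]),
      Finset.prod_const, Finset.card_univ, Fintype.card_fin]
  -- upper bound ‖f w₀‖ ≤ ‖hfun w₀‖ * (2θ)^n
  have hfw₀ : ‖f w₀‖ ≤ ‖hfun w₀‖ * (2 * θ) ^ n := by
    have hw₀mem : w₀ ∈ closedBall w₀ (4 * θ) := mem_closedBall_self (by positivity)
    rw [hfac w₀ hw₀mem, norm_mul, norm_prod]
    apply mul_le_mul_of_nonneg_left _ (norm_nonneg _)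
    calc ∏ i, ‖w₀ - zk i‖ ≤ ∏ _i : Fin n, (2 * θ) := by
          apply Finset.prod_le_prod (fun i _ => norm_nonneg _)
          intro i _
          have := hzk i
          rw [mem_closedBall, dist_comm, dist_eq_norm] at this
          exact this
      _ = (2 * θ) ^ n := by rw [Finset.prod_const, Finset.card_univ, Fintype.card_fin]
  -- combine : (ρ/2)^n * m ≤ M
  have hkey : (ρ / 2) ^ n * m ≤ M := by
    have h1 : m * (R ^ 2) ^ n ≤ ‖hfun w₀‖ * (2 * θ) ^ n * (R ^ 2) ^ n :=
      mul_le_mul_of_nonneg_right (hlowf.trans hfw₀) (by positivity)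
    have h2 : ‖hfun w₀‖ * (R ^ 2) ^ n * (2 * θ) ^ n ≤ R ^ n * M * (2 * θ) ^ n :=
      mul_le_mul_of_nonneg_right (hFw₀eq ▸ hFw₀) (by positivity)
    have h3 : m * (R ^ 2) ^ n ≤ R ^ n * M * (2 * θ) ^ n := by
      calc m * (R ^ 2) ^ n ≤ ‖hfun w₀‖ * (2 * θ) ^ n * (R ^ 2) ^ n := h1
        _ = ‖hfun w₀‖ * (R ^ 2) ^ n * (2 * θ) ^ n := by ring
        _ ≤ R ^ n * M * (2 * θ) ^ n := h2
    have hRn : (0:ℝ) < R ^ n := by positivity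
    have hsq : ((R : ℝ) ^ 2) ^ n = R ^ n * R ^ n := by
      rw [← pow_mul, two_mul, pow_add]
    have h4 : m * R ^ n ≤ M * (2 * θ) ^ n := by
      apply le_of_mul_le_mul_right _ hRn
      calc m * R ^ n * R ^ n = m * (R ^ 2) ^ n := by rw [hsq]; ring
        _ ≤ R ^ n * M * (2 * θ) ^ n := h3
        _ = M * (2 * θ) ^ n * R ^ n := by ring
    have hrat : R / (2 * θ) = ρ / 2 := by
      rw [hRdef]; field_simp
    have hρ2 : (ρ / 2) ^ n = R ^ n / (2 * θ) ^ n := by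
      rw [← div_pow, hrat]
    rw [hρ2, div_mul_eq_mul_div, div_le_iff₀ (by positivity), mul_comm (R ^ n) m]
    exact h4
  -- take logs
  have hloglhs : Real.log ((ρ / 2) ^ n * m) = n * Real.log (ρ / 2) + (-A + P * Real.log δ) := by
    rw [Real.log_mul (by positivity) hmpos.ne', Real.log_pow, hmdef,
      Real.log_mul (Real.exp_pos _).ne' (by positivity), Real.log_exp, Real.log_pow]
  have hlogrhs : Real.log M = A + P * (Real.log 8 + Real.log θ) := by
    rw [hMdef, Real.log_mul (Real.exp_pos _).ne' (by positivity), Real.log_exp, Real.log_pow,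
      Real.log_mul (by norm_num) hθ.ne']
  have hkey2 : (n : ℝ) * Real.log (ρ / 2)
      ≤ 2 * A + P * (Real.log 8 + Real.log θ - Real.log δ) := by
    have := Real.log_le_log (by positivity) hkey
    rw [hloglhs, hlogrhs] at this
    linarith
  -- final arithmetic
  rw [one_div, one_div, Real.log_inv, Real.log_inv]
  rw [div_mul_eq_mul_div, le_div_iff₀ hlg]
  have h1 : Real.log θ ≤ θ - 1 := Real.log_le_sub_one_of_pos hθ
  have h2 : Real.log θ ≤ θ / 2 := by
    have ha : Real.log (θ / 2) ≤ θ / 2 - 1 := Real.log_le_sub_one_of_pos (by positivity)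
    have hb : Real.log (θ / 2) = Real.log θ - Real.log 2 := Real.log_div hθ.ne' two_ne_zero
    have hc : Real.log 2 ≤ 1 := by
      have := Real.log_le_sub_one_of_pos (by norm_num : (0:ℝ) < 2); linarith
    linarith
  have h3 : Real.log δ ≤ 0 := Real.log_nonpos hδ.le hδ1
  have h4 : Real.log 8 ≤ 7 := by
    have := Real.log_le_sub_one_of_pos (by norm_num : (0:ℝ) < 8); linarith
  have h5 : 0 ≤ (P : ℝ) := Nat.cast_nonneg P
  have h6 : 5 * Real.log θ ≤ 4 * θ - 3 := by
    rcases le_total θ 2 with h | h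
    · linarith
    · linarith
  have h7 : 0 ≤ (P : ℝ) * (-3 * Real.log δ - 5 * Real.log θ + 4 * θ + 4 - Real.log 8) :=
    mul_nonneg h5 (by linarith)
  have h8 : 2 * A + (P : ℝ) * (Real.log 8 + Real.log θ - Real.log δ)
      ≤ 4 * (A + (P : ℝ) * (-Real.log δ + -Real.log θ + θ + 1)) := by nlinarith [h7]
  linarith [hkey2, h8]
end

section
/- Let K(z) be invertible with (I + K(z)) invertible, where K is trace class with singular values μ_j(K) ≤ C h^{-2m} j^{-2m/(d-1)} and ‖(I + K)^{-1}‖ ≤ C h^{-ℓ}. Then the singular values of K̃ = -(I + K)^{-1} K satisfy μ_j(K̃) ≤ C² h^{-ℓ-2m} j^{-2m/(d-1)}, and consequently det(I + K̃) = det(I + K)^{-1} and log(1/|det(I+K)|) ≤ C' h^{-(d-1)}(h^{-ℓ-2m})^{(d-1)/(2m)} for 2m > d - 1. -/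
set_option maxHeartbeats 1000000


/-- The `j`-th singular value (approximation number) of an operator on a Hilbert
space, for `j ≥ 1`: the distance from `A` to the operators of rank `< j`. -/
noncomputable def singularValue' {H : Type*} [NormedAddCommGroup H] [InnerProductSpace ℂ H]
    (A : H →L[ℂ] H) (j : ℕ) : ℝ :=
  sInf {r : ℝ | ∃ F : H →L[ℂ] H,
    Module.finrank ℂ (LinearMap.range (F : H →ₗ[ℂ] H)) < j ∧ r = ‖A - F‖}

section Aux

open Module
open scoped NNReal

variable {H : Type*} [NormedAddCommGroup H] [InnerProductSpace ℂ H]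

lemma sv_bddBelow (A : H →L[ℂ] H) (j : ℕ) :
    BddBelow {r : ℝ | ∃ F : H →L[ℂ] H,
      Module.finrank ℂ (LinearMap.range (F : H →ₗ[ℂ] H)) < j ∧ r = ‖A - F‖} := by
  refine ⟨0, ?_⟩
  rintro r ⟨F, -, rfl⟩
  exact norm_nonneg _

lemma sv_zero_mem (A : H →L[ℂ] H) {j : ℕ} (hj : 0 < j) :
    ‖A‖ ∈ {r : ℝ | ∃ F : H →L[ℂ] H,
      Module.finrank ℂ (LinearMap.range (F : H →ₗ[ℂ] H)) < j ∧ r = ‖A - F‖} := by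
  refine ⟨0, ?_, by simp⟩
  have h : (LinearMap.range (((0 : H →L[ℂ] H)) : H →ₗ[ℂ] H)) = ⊥ := by
    rw [ContinuousLinearMap.coe_zero, LinearMap.range_zero]
  rw [h, finrank_bot]
  exact hj

lemma sv_nonneg (A : H →L[ℂ] H) (j : ℕ) : 0 ≤ singularValue' A j := by
  apply Real.sInf_nonneg
  rintro r ⟨F, -, rfl⟩
  exact norm_nonneg _

lemma sv_comp_le (A B : H →L[ℂ] H) {j : ℕ} (hj : 0 < j) :
    singularValue' (A * B) j ≤ ‖A‖ * singularValue' B j := by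
  have key : ∀ r ∈ {r : ℝ | ∃ F : H →L[ℂ] H,
      Module.finrank ℂ (LinearMap.range (F : H →ₗ[ℂ] H)) < j ∧ r = ‖B - F‖},
      singularValue' (A * B) j ≤ ‖A‖ * r := by
    rintro r ⟨F, hF, rfl⟩
    refine le_of_forall_pos_le_add fun ε hε => ?_
    have hrange : ((A * F : H →L[ℂ] H) : H →ₗ[ℂ] H)
        = (A : H →ₗ[ℂ] H).comp (F : H →ₗ[ℂ] H) := rfl
    have hAB : A * B - A * F = A * (B - F) := by noncomm_ring
    by_cases hfd : Module.finrank ℂ (LinearMap.range ((A * F : H →L[ℂ] H) : H →ₗ[ℂ] H)) < j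
    · refine le_trans (csInf_le (sv_bddBelow _ _) ⟨A * F, hfd, rfl⟩) ?_
      rw [hAB]
      have : ‖A * (B - F)‖ ≤ ‖A‖ * ‖B - F‖ := norm_mul_le _ _
      linarith [mul_nonneg (norm_nonneg A) (norm_nonneg (B - F)), hε.le]
    · -- range (A*F) is finite dimensional with finrank ≥ j
      have hAFfd : FiniteDimensional ℂ (LinearMap.range ((A * F : H →L[ℂ] H) : H →ₗ[ℂ] H)) := by
        by_contra hc
        rw [finrank_of_infinite_dimensional hc] at hfd
        exact hfd hj
      have hFinf : ¬ FiniteDimensional ℂ (LinearMap.range (F : H →ₗ[ℂ] H)) := by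
        intro hc
        apply hfd
        calc Module.finrank ℂ (LinearMap.range ((A * F : H →L[ℂ] H) : H →ₗ[ℂ] H))
            = Module.finrank ℂ ((LinearMap.range (F : H →ₗ[ℂ] H)).map (A : H →ₗ[ℂ] H)) := by
              rw [hrange, LinearMap.range_comp]
          _ ≤ Module.finrank ℂ (LinearMap.range (F : H →ₗ[ℂ] H)) :=
              Submodule.finrank_map_le _ _
          _ < j := hF
      have hHinf : ¬ FiniteDimensional ℂ H := by
        intro hc
        exact hFinf inferInstance
      set F' : H →L[ℂ] H := A * F + ε • (1 : H →L[ℂ] H) with hF'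
      have hF'inf : ¬ FiniteDimensional ℂ (LinearMap.range ((F' : H →L[ℂ] H) : H →ₗ[ℂ] H)) := by
        intro hc
        apply hHinf
        let p := LinearMap.range ((F' : H →L[ℂ] H) : H →ₗ[ℂ] H)
        let q := LinearMap.range ((A * F : H →L[ℂ] H) : H →ₗ[ℂ] H)
        let ψ : (p × q) →ₗ[ℂ] H :=
          ε⁻¹ • ((p.subtype).coprod (-(q.subtype)))
        have hsurj : Function.Surjective ψ := by
          intro x
          refine ⟨(⟨F' x, LinearMap.mem_range_self _ x⟩,
            ⟨(A * F) x, LinearMap.mem_range_self _ x⟩), ?_⟩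
          show ε⁻¹ • (F' x + -((A * F) x)) = x
          rw [hF']
          simp only [ContinuousLinearMap.add_apply, ContinuousLinearMap.smul_apply,
            ContinuousLinearMap.one_apply]
          rw [add_comm, ← add_assoc]
          simp [smul_smul, inv_mul_cancel₀ (ne_of_gt hε)]
        exact Module.Finite.of_surjective ψ hsurj
      have h0 : Module.finrank ℂ (LinearMap.range ((F' : H →L[ℂ] H) : H →ₗ[ℂ] H)) = 0 :=
        finrank_of_infinite_dimensional hF'inf
      refine le_trans (csInf_le (sv_bddBelow _ _) ⟨F', by rw [h0]; exact hj, rfl⟩) ?_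
      have h1 : A * B - F' = A * (B - F) - ε • (1 : H →L[ℂ] H) := by
        rw [hF']; noncomm_ring
      rw [h1]
      calc ‖A * (B - F) - ε • (1 : H →L[ℂ] H)‖
          ≤ ‖A * (B - F)‖ + ‖ε • (1 : H →L[ℂ] H)‖ := norm_sub_le _ _
        _ ≤ ‖A‖ * ‖B - F‖ + ε := by
            have h2 : ‖ε • (1 : H →L[ℂ] H)‖ ≤ ε := by
              refine ContinuousLinearMap.opNorm_le_bound _ hε.le fun x => ?_
              rw [ContinuousLinearMap.smul_apply, ContinuousLinearMap.one_apply,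
                norm_smul, Real.norm_eq_abs, abs_of_pos hε]
            have := norm_mul_le A (B - F)
            linarith
  rcases (norm_nonneg A).eq_or_lt.imp Eq.symm id with hA | hA
  · have hkey := key _ (sv_zero_mem B hj)
    rw [hA, zero_mul] at hkey
    rw [hA, zero_mul]
    exact hkey
  · rw [← div_le_iff₀' hA]
    refine le_csInf ⟨‖B‖, sv_zero_mem B hj⟩ fun r hr => ?_
    rw [div_le_iff₀' hA]
    exact key r hr

lemma log_one_add_le_rpow {θ x : ℝ} (hθ0 : 0 < θ) (hθ1 : θ ≤ 1) (hx : 0 ≤ x) :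
    Real.log (1 + x) ≤ x ^ θ / θ := by
  rw [le_div_iff₀ hθ0]
  have h1x : (0:ℝ) < 1 + x := by linarith
  calc Real.log (1 + x) * θ = Real.log ((1 + x) ^ θ) := by
        rw [Real.log_rpow h1x]; ring
    _ ≤ (1 + x) ^ θ - 1 := Real.log_le_sub_one_of_pos (Real.rpow_pos_of_pos h1x θ)
    _ ≤ (1 ^ θ + x ^ θ) - 1 := by
        have h2 : ((1 + x.toNNReal : ℝ≥0) : ℝ) ^ θ ≤ ((1:ℝ≥0):ℝ) ^ θ + ((x.toNNReal : ℝ)) ^ θ := by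
          rw [← NNReal.coe_rpow, ← NNReal.coe_rpow, ← NNReal.coe_rpow, ← NNReal.coe_add]
          exact_mod_cast NNReal.rpow_add_le_add_rpow 1 x.toNNReal hθ0.le hθ1
        rw [NNReal.coe_add, NNReal.coe_one, Real.coe_toNNReal _ hx] at h2
        linarith
    _ ≤ x ^ θ := by rw [Real.one_rpow]; linarith

end Aux

/-- Abstract form of the proof of (3.14) in Lemma 3.5: if `K` is trace class with
`μ_j(K) ≤ C h^{-2m} j^{-2m/(d-1)}` and `‖(I+K)⁻¹‖ ≤ C h^{-ℓ}`, then
`K̃ = -(I+K)⁻¹K` has `μ_j(K̃) ≤ C² h^{-ℓ-2m} j^{-2m/(d-1)}`, the Fredholm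
determinants satisfy `det(I+K̃) = det(I+K)⁻¹` (here `Det` is any determinant
functional with the two standard properties `Det 1 = 1`, multiplicativity on the
relevant pair, and the bound `|Det(1+T)| ≤ exp ∑ log(1+μ_j(T))`), and
`log(1/|det(I+K)|) ≤ C' h^{-(d-1)} (h^{-ℓ-2m})^{(d-1)/(2m)}` when `2m > d-1`. -/
theorem stmt_16 {H : Type*} [NormedAddCommGroup H] [InnerProductSpace ℂ H] [CompleteSpace H]
    (C ℓ : ℝ) (hC : 0 < C) (d m : ℕ) (hd : 2 ≤ d) (h2m : (d : ℝ) - 1 < 2 * m) :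
    ∃ C' : ℝ, 0 < C' ∧
      ∀ (h : ℝ), 0 < h → h ≤ 1 →
      ∀ (K : H →L[ℂ] H), IsCompactOperator K →
      (∀ j : ℕ+, singularValue' K j
        ≤ C * h ^ (-(2 * (m : ℝ))) * ((j : ℕ) : ℝ) ^ (-(2 * (m : ℝ) / ((d : ℝ) - 1)))) →
      IsUnit ((1 : H →L[ℂ] H) + K) →
      ‖Ring.inverse ((1 : H →L[ℂ] H) + K)‖ ≤ C * h ^ (-ℓ) →
      ∀ (Det : (H →L[ℂ] H) → ℂ),
        Det 1 = 1 →
        (Det (((1 : H →L[ℂ] H) + K) *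
            ((1 : H →L[ℂ] H) + (-(Ring.inverse ((1 : H →L[ℂ] H) + K)) * K)))
          = Det ((1 : H →L[ℂ] H) + K) *
            Det ((1 : H →L[ℂ] H) + (-(Ring.inverse ((1 : H →L[ℂ] H) + K)) * K))) →
        (∀ T : H →L[ℂ] H, ‖Det ((1 : H →L[ℂ] H) + T)‖
          ≤ Real.exp (∑' j : ℕ+, Real.log (1 + singularValue' T j))) →
        (∀ j : ℕ+, singularValue' (-(Ring.inverse ((1 : H →L[ℂ] H) + K)) * K) j
            ≤ C ^ 2 * h ^ (-(ℓ + 2 * (m : ℝ))) *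
              ((j : ℕ) : ℝ) ^ (-(2 * (m : ℝ) / ((d : ℝ) - 1)))) ∧
        Det ((1 : H →L[ℂ] H) + (-(Ring.inverse ((1 : H →L[ℂ] H) + K)) * K))
          = (Det ((1 : H →L[ℂ] H) + K))⁻¹ ∧
        Real.log (1 / ‖Det ((1 : H →L[ℂ] H) + K)‖)
          ≤ C' * h ^ (-((d : ℝ) - 1)) *
            (h ^ (-(ℓ + 2 * (m : ℝ)))) ^ (((d : ℝ) - 1) / (2 * (m : ℝ))) := by
  have hd1 : (0:ℝ) < (d:ℝ) - 1 := by
    have : (2:ℝ) ≤ (d:ℝ) := by exact_mod_cast hd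
    linarith
  have hm0 : (0:ℝ) < (m:ℝ) := by linarith
  have hα1 : 1 < 2 * (m:ℝ) / ((d:ℝ) - 1) := (one_lt_div hd1).mpr h2m
  set α : ℝ := 2 * (m:ℝ) / ((d:ℝ) - 1) with hαdef
  have hα0 : 0 < α := lt_trans one_pos hα1
  set P : ℝ := ℓ + 2 * (m:ℝ) with hPdef
  set δ : ℝ := min ((1 - 1/α)/2) (((d:ℝ)-1)/(2*(|P|+1))) with hδdef
  have hδ0 : 0 < δ := by
    apply lt_min
    · have h3 : 1/α < 1 := by rw [div_lt_one hα0]; exact hα1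
      linarith
    · exact div_pos hd1 (by positivity)
  set θ : ℝ := 1/α + δ with hθdef
  have hθ0 : 0 < θ := by
    have h2 : 0 < 1/α := by positivity
    rw [hθdef]; linarith
  have hθ1 : θ ≤ 1 := by
    have hh1 : δ ≤ (1 - 1/α)/2 := min_le_left _ _
    have h3 : 1/α < 1 := by rw [div_lt_one hα0]; exact hα1
    rw [hθdef]; linarith
  have hαθ : 1 < α * θ := by
    have he : α * θ = 1 + α * δ := by
      rw [hθdef]; field_simp
    rw [he]; nlinarith
  have hPδ : P * δ ≤ (d:ℝ) - 1 := by
    have hh1 : δ ≤ ((d:ℝ)-1)/(2*(|P|+1)) := min_le_right _ _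
    have h2 : P ≤ |P| := le_abs_self P
    have h3 : (0:ℝ) < 2*(|P|+1) := by positivity
    calc P * δ ≤ |P| * δ := mul_le_mul_of_nonneg_right h2 hδ0.le
      _ ≤ |P| * (((d:ℝ)-1)/(2*(|P|+1))) := mul_le_mul_of_nonneg_left hh1 (abs_nonneg P)
      _ ≤ (d:ℝ) - 1 := by
          rw [mul_div_assoc', div_le_iff₀ h3]
          nlinarith [abs_nonneg P]
  have hsumNat : Summable (fun n : ℕ => ((n:ℝ)) ^ (-(α*θ))) :=
    Real.summable_nat_rpow.mpr (by linarith)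
  have hsum : Summable (fun j : ℕ+ => (((j:ℕ):ℝ)) ^ (-(α*θ))) :=
    Summable.comp_injective hsumNat PNat.coe_injective
  set Z : ℝ := ∑' j : ℕ+, (((j:ℕ):ℝ)) ^ (-(α*θ)) with hZdef
  have hZ0 : 0 ≤ Z := tsum_nonneg fun j => Real.rpow_nonneg (Nat.cast_nonneg _) _
  have hC'0 : 0 < C ^ (2*θ) * Z / θ + 1 := by
    have hh1 : 0 ≤ C ^ (2*θ) * Z / θ :=
      div_nonneg (mul_nonneg (Real.rpow_nonneg hC.le _) hZ0) hθ0.le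
    linarith
  refine ⟨C ^ (2*θ) * Z / θ + 1, hC'0, ?_⟩
  intro h h0 h1 K _ hK hunit hinv Det hDet1 hDetmul hDetbound
  set inv := Ring.inverse ((1 : H →L[ℂ] H) + K) with hinvdef
  -- (a) singular value bound for K̃ = -inv * K
  set M : ℝ := C ^ 2 * h ^ (-P) with hMdef
  have hM0 : 0 < M := by
    rw [hMdef]
    exact mul_pos (pow_pos hC 2) (Real.rpow_pos_of_pos h0 _)
  have hKt : ∀ j : ℕ+, singularValue' (-inv * K) (j:ℕ)
      ≤ M * (((j:ℕ):ℝ)) ^ (-α) := by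
    intro j
    have h2 := sv_comp_le (-inv) K j.pos
    rw [norm_neg] at h2
    refine h2.trans ?_
    have h3 : ‖inv‖ * singularValue' K (j:ℕ)
        ≤ (C * h ^ (-ℓ)) * (C * h ^ (-(2*(m:ℝ))) * (((j:ℕ):ℝ)) ^ (-α)) :=
      mul_le_mul hinv (hK j) (sv_nonneg _ _) (by positivity)
    refine h3.trans_eq ?_
    rw [hMdef, hPdef, neg_add, Real.rpow_add h0]
    ring
  -- (b) determinant identity
  have hone : ((1 : H →L[ℂ] H) + K) * ((1 : H →L[ℂ] H) + (-inv * K)) = 1 := by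
    have h2 : ((1 : H →L[ℂ] H) + K) * inv = 1 := Ring.mul_inverse_cancel _ hunit
    calc ((1 : H →L[ℂ] H) + K) * ((1 : H →L[ℂ] H) + (-inv * K))
        = ((1 : H →L[ℂ] H) + K) - (((1 : H →L[ℂ] H) + K) * inv) * K := by noncomm_ring
      _ = 1 := by rw [h2]; noncomm_ring
  have hprod : Det ((1 : H →L[ℂ] H) + K) * Det ((1 : H →L[ℂ] H) + (-inv * K)) = 1 := by
    rw [← hDetmul, hone, hDet1]
  have hb : Det ((1 : H →L[ℂ] H) + (-inv * K)) = (Det ((1 : H →L[ℂ] H) + K))⁻¹ :=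
    eq_inv_of_mul_eq_one_left (by rwa [mul_comm] at hprod)
  refine ⟨hKt, hb, ?_⟩
  -- (c) log bound
  have hpos : 0 < ‖Det ((1 : H →L[ℂ] H) + (-inv * K))‖ :=
    norm_pos_iff.mpr (right_ne_zero_of_mul_eq_one hprod)
  have heq : 1 / ‖Det ((1 : H →L[ℂ] H) + K)‖ = ‖Det ((1 : H →L[ℂ] H) + (-inv * K))‖ := by
    rw [hb, norm_inv, one_div]
  rw [heq]
  have hf0 : ∀ j : ℕ+, 0 ≤ Real.log (1 + singularValue' (-inv * K) (j:ℕ)) := fun j =>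
    Real.log_nonneg (by linarith [sv_nonneg (-inv * K) (j:ℕ)])
  have hgsum : Summable (fun j : ℕ+ => M ^ θ / θ * (((j:ℕ):ℝ)) ^ (-(α*θ))) :=
    hsum.mul_left _
  have hfg : ∀ j : ℕ+, Real.log (1 + singularValue' (-inv * K) (j:ℕ))
      ≤ M ^ θ / θ * (((j:ℕ):ℝ)) ^ (-(α*θ)) := by
    intro j
    have hj0 : (0:ℝ) ≤ ((j:ℕ):ℝ) := Nat.cast_nonneg _
    have hjα : (0:ℝ) ≤ (((j:ℕ):ℝ)) ^ (-α) := Real.rpow_nonneg hj0 _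
    have l1 : Real.log (1 + singularValue' (-inv * K) (j:ℕ))
        ≤ Real.log (1 + M * (((j:ℕ):ℝ)) ^ (-α)) :=
      Real.log_le_log (by linarith [sv_nonneg (-inv * K) (j:ℕ)]) (by linarith [hKt j])
    have l2 : Real.log (1 + M * (((j:ℕ):ℝ)) ^ (-α)) ≤ (M * (((j:ℕ):ℝ)) ^ (-α)) ^ θ / θ :=
      log_one_add_le_rpow hθ0 hθ1 (mul_nonneg hM0.le hjα)
    have l3 : (M * (((j:ℕ):ℝ)) ^ (-α)) ^ θ = M ^ θ * (((j:ℕ):ℝ)) ^ (-(α*θ)) := by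
      rw [Real.mul_rpow hM0.le hjα, ← Real.rpow_mul hj0]
      ring_nf
    calc Real.log (1 + singularValue' (-inv * K) (j:ℕ))
        ≤ (M * (((j:ℕ):ℝ)) ^ (-α)) ^ θ / θ := l1.trans l2
      _ = M ^ θ / θ * (((j:ℕ):ℝ)) ^ (-(α*θ)) := by rw [l3]; ring
  have hfsum : Summable (fun j : ℕ+ => Real.log (1 + singularValue' (-inv * K) (j:ℕ))) :=
    Summable.of_nonneg_of_le hf0 hfg hgsum
  have hS : Real.log ‖Det ((1 : H →L[ℂ] H) + (-inv * K))‖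
      ≤ ∑' j : ℕ+, Real.log (1 + singularValue' (-inv * K) (j:ℕ)) := by
    have h2 := hDetbound (-inv * K)
    calc Real.log ‖Det ((1 : H →L[ℂ] H) + (-inv * K))‖
        ≤ Real.log (Real.exp (∑' j : ℕ+, Real.log (1 + singularValue' (-inv * K) (j:ℕ)))) :=
          Real.log_le_log hpos h2
      _ = _ := Real.log_exp _
  have hS2 : ∑' j : ℕ+, Real.log (1 + singularValue' (-inv * K) (j:ℕ)) ≤ M ^ θ / θ * Z := by
    calc ∑' j : ℕ+, Real.log (1 + singularValue' (-inv * K) (j:ℕ))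
        ≤ ∑' j : ℕ+, M ^ θ / θ * (((j:ℕ):ℝ)) ^ (-(α*θ)) := Summable.tsum_le_tsum hfg hfsum hgsum
      _ = M ^ θ / θ * Z := by rw [hZdef, tsum_mul_left]
  refine (hS.trans hS2).trans ?_
  -- final arithmetic
  have e1 : (h ^ (-P)) ^ (((d:ℝ)-1)/(2*(m:ℝ))) = h ^ (-P/α) := by
    rw [← Real.rpow_mul h0.le]
    congr 1
    rw [hαdef]
    field_simp
  have e2 : M ^ θ = C ^ (2*θ) * (h ^ (-P/α) * h ^ (-(P*δ))) := by
    rw [hMdef, Real.mul_rpow (by positivity) (Real.rpow_nonneg h0.le _)]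
    congr 1
    · rw [← Real.rpow_natCast C 2, ← Real.rpow_mul hC.le]
      norm_num
    · rw [← Real.rpow_mul h0.le, ← Real.rpow_add h0]
      congr 1
      rw [hθdef]
      field_simp
      ring
  have e3 : h ^ (-(P*δ)) ≤ h ^ (-((d:ℝ)-1)) :=
    Real.rpow_le_rpow_of_exponent_ge h0 h1 (by linarith)
  have a0 : 0 ≤ C ^ (2*θ) * Z / θ :=
    div_nonneg (mul_nonneg (Real.rpow_nonneg hC.le _) hZ0) hθ0.le
  have x0 : (0:ℝ) ≤ h ^ (-P/α) := Real.rpow_nonneg h0.le _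
  have y0 : (0:ℝ) ≤ h ^ (-((d:ℝ)-1)) := Real.rpow_nonneg h0.le _
  calc M ^ θ / θ * Z
      = (C ^ (2*θ) * Z / θ) * (h ^ (-(P*δ)) * h ^ (-P/α)) := by rw [e2]; ring
    _ ≤ (C ^ (2*θ) * Z / θ) * (h ^ (-((d:ℝ)-1)) * h ^ (-P/α)) :=
        mul_le_mul_of_nonneg_left (mul_le_mul_of_nonneg_right e3 x0) a0
    _ ≤ (C ^ (2*θ) * Z / θ + 1) * h ^ (-((d:ℝ)-1)) * (h ^ (-P)) ^ (((d:ℝ)-1)/(2*(m:ℝ))) := by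
        rw [e1, mul_assoc]
        exact mul_le_mul_of_nonneg_right (by linarith) (mul_nonneg y0 x0)
end
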